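/- In the n-item identification test with noise-free constant similarity of resolution ε on a separable metric probability space with absolutely continuous ball measures, the success probability equals E_{p∼ν}[(1 - (1-b_p(ε))^n)/(n·b_p(ε))] (interpreting the integrand as 1 when b_p(ε) = 0). -/

import Mathlib

open MeasureTheory Metric

/-- `f` is absolutely continuous on the interval `[c, d]`. -/
def AbsolutelyContinuousOnIcc (f : ℝ → ℝ) (c d : ℝ) : Prop :=
  ∀ ε > 0, ∃ δ > 0, ∀ (m : ℕ) (a b : Fin m → ℝ),
    (∀ i, c ≤ a i ∧ a i ≤ b i ∧ b i ≤ d) →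
    (∀ i j, i ≠ j → Set.Ioo (a i) (b i) ∩ Set.Ioo (a j) (b j) = ∅) →
    (∑ i, (b i - a i)) < δ → (∑ i, |f (b i) - f (a i)|) < ε

/-- Number of items among `x` lying within distance `ε` of the probe `x j`
(each such item has similarity `1` to the probe, the others `0`). -/
noncomputable def simCount {M : Type*} [MetricSpace M] {n : ℕ} (ε : ℝ)
    (x : Fin n → M) (j : Fin n) : ℝ :=
  ∑ i : Fin n, if dist (x i) (x j) ≤ ε then (1 : ℝ) else 0

/-- Identification-test success probability given the `n` sampled items: the probe is one
of them chosen uniformly, and the model answers `i` with probability proportional to the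
similarity of `x i` to the probe (so the probe's index is chosen with probability
`1 / simCount`). -/
noncomputable def idSuccN {M : Type*} [MetricSpace M] {n : ℕ} (ε : ℝ) (x : Fin n → M) : ℝ :=
  (1 / (n : ℝ)) * ∑ j : Fin n, 1 / simCount ε x j


noncomputable def cntN {M : Type*} [MetricSpace M] (ε : ℝ) (p : M) {m : ℕ} (y : Fin m → M) : ℕ :=
  ∑ i, if dist (y i) p ≤ ε then 1 else 0

lemma cntN_le {M : Type*} [MetricSpace M] (ε : ℝ) (p : M) {m : ℕ} (y : Fin m → M) :
    cntN ε p y ≤ m := by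
  unfold cntN
  calc ∑ i : Fin m, (if dist (y i) p ≤ ε then 1 else 0)
      ≤ ∑ _i : Fin m, 1 := Finset.sum_le_sum (fun i _ => by split <;> omega)
    _ = m := by simp

lemma measurable_cntN {M : Type*} [MetricSpace M] [MeasurableSpace M] [BorelSpace M]
    [TopologicalSpace.SeparableSpace M] {m : ℕ} (ε : ℝ) :
    Measurable (fun z : M × (Fin m → M) => cntN ε z.1 z.2) := by
  haveI : SecondCountableTopology M := UniformSpace.secondCountable_of_separable M
  unfold cntN
  apply Finset.measurable_sum
  intro i _
  have hc : Continuous (fun z : M × (Fin m → M) => dist (z.2 i) z.1) :=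
    Continuous.dist ((continuous_apply i).comp continuous_snd) continuous_fst
  have hs : MeasurableSet {z : M × (Fin m → M) | dist (z.2 i) z.1 ≤ ε} :=
    measurableSet_le hc.measurable measurable_const
  exact Measurable.ite hs measurable_const measurable_const

lemma pascal_step (m : ℕ) (b : ℝ) (f : ℕ → ℝ) :
    b * (∑ k ∈ Finset.range (m+1), (m.choose k : ℝ) * b^k * (1-b)^(m-k) * f (k+1))
      + (1-b) * (∑ k ∈ Finset.range (m+1), (m.choose k : ℝ) * b^k * (1-b)^(m-k) * f k)
    = ∑ k ∈ Finset.range (m+2), ((m+1).choose k : ℝ) * b^k * (1-b)^(m+1-k) * f k := by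
  rw [Finset.sum_range_succ' (fun k => ((m+1).choose k : ℝ) * b^k * (1-b)^(m+1-k) * f k) (m+1)]
  have hsplit : ∀ k ∈ Finset.range (m+1),
      (((m+1).choose (k+1) : ℝ)) * b^(k+1) * (1-b)^(m+1-(k+1)) * f (k+1)
        = b * ((m.choose k : ℝ) * b^k * (1-b)^(m-k) * f (k+1))
          + (m.choose (k+1) : ℝ) * b^(k+1) * (1-b)^(m-k) * f (k+1) := by
    intro k _
    have h1 : (m+1).choose (k+1) = m.choose k + m.choose (k+1) := Nat.choose_succ_succ _ _
    have h2 : m + 1 - (k+1) = m - k := by omega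
    rw [h1, h2]
    push_cast
    ring
  rw [Finset.sum_congr rfl hsplit, Finset.sum_add_distrib]
  have h2 : ∑ k ∈ Finset.range (m+1), (m.choose (k+1) : ℝ) * b^(k+1) * (1-b)^(m-k) * f (k+1)
      = ∑ k ∈ Finset.range m, (m.choose (k+1) : ℝ) * b^(k+1) * (1-b)^(m-k) * f (k+1) := by
    rw [Finset.sum_range_succ]
    simp
  have h3 : (1-b) * (∑ k ∈ Finset.range (m+1), (m.choose k : ℝ) * b^k * (1-b)^(m-k) * f k)
      = (∑ k ∈ Finset.range m, (m.choose (k+1) : ℝ) * b^(k+1) * (1-b)^(m-k) * f (k+1))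
        + ((m+1).choose 0 : ℝ) * b^0 * (1-b)^(m+1-0) * f 0 := by
    rw [Finset.mul_sum,
      Finset.sum_range_succ' (fun k => (1-b) * ((m.choose k : ℝ) * b^k * (1-b)^(m-k) * f k)) m]
    congr 1
    · apply Finset.sum_congr rfl
      intro k hk
      have hk' : k < m := Finset.mem_range.1 hk
      have h4 : m - k = (m - (k+1)) + 1 := by omega
      rw [h4]
      ring
    · simp [pow_succ]
      ring
  rw [h2, ← Finset.mul_sum]
  rw [h3]
  rw [Finset.mul_sum]
  ring

lemma binom_sum_inv (m : ℕ) (b : ℝ) :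
    ∑ k ∈ Finset.range (m+1), (m.choose k : ℝ) * b^k * (1-b)^(m-k) * (1/(1+(k:ℝ)))
      = if b = 0 then 1 else (1 - (1-b)^(m+1)) / (((m:ℝ)+1) * b) := by
  by_cases hb : b = 0
  · rw [if_pos hb, Finset.sum_eq_single 0]
    · simp [hb]
    · intro k _ hk
      rw [hb, zero_pow hk]
      ring
    · intro h
      exact absurd (Finset.mem_range.2 (Nat.succ_pos m)) h
  · rw [if_neg hb]
    have hm1 : ((m:ℝ)+1) ≠ 0 := by positivity
    have hkey : ∀ k ∈ Finset.range (m+1),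
        (m.choose k : ℝ) * b^k * (1-b)^(m-k) * (1/(1+(k:ℝ)))
          = (((m+1).choose (k+1) : ℝ) * b^(k+1) * (1-b)^(m-k)) / (((m:ℝ)+1) * b) := by
      intro k _
      have hc' : ((m:ℝ)+1) * (m.choose k : ℝ) = ((m+1).choose (k+1) : ℝ) * ((k:ℝ)+1) := by
        have hc := Nat.add_one_mul_choose_eq m k
        exact_mod_cast hc
      have hk1 : (1+(k:ℝ)) ≠ 0 := by positivity
      rw [mul_one_div, div_eq_div_iff hk1 (mul_ne_zero hm1 hb)]
      linear_combination b^(k+1) * (1-b)^(m-k) * hc'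
    rw [Finset.sum_congr rfl hkey, ← Finset.sum_div]
    congr 1
    have hpow : ∑ k ∈ Finset.range (m+2), b^k * (1-b)^(m+1-k) * ((m+1).choose k : ℝ) = 1 := by
      have := add_pow b (1-b) (m+1)
      simpa using this.symm
    rw [Finset.sum_range_succ' (fun k => b^k * (1-b)^(m+1-k) * ((m+1).choose k : ℝ)) (m+1)]
      at hpow
    simp only [pow_zero, Nat.choose_zero_right, Nat.cast_one, one_mul, mul_one,
      Nat.succ_sub_succ, Nat.sub_zero] at hpow
    have h5 : ∑ k ∈ Finset.range (m+1), ((m+1).choose (k+1) : ℝ) * b^(k+1) * (1-b)^(m-k)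
        = ∑ k ∈ Finset.range (m+1), b^(k+1) * (1-b)^(m-k) * ((m+1).choose (k+1) : ℝ) := by
      apply Finset.sum_congr rfl
      intro k _
      ring
    rw [h5]
    linarith [hpow]

lemma key_binom {M : Type*} [MetricSpace M] [MeasurableSpace M] [BorelSpace M]
    [TopologicalSpace.SeparableSpace M]
    (ν : Measure M) [IsProbabilityMeasure ν] (ε : ℝ) (p : M) :
    ∀ (m : ℕ) (f : ℕ → ℝ),
      ∫ y : Fin m → M, f (cntN ε p y) ∂(Measure.pi fun _ => ν)
        = ∑ k ∈ Finset.range (m+1), (m.choose k : ℝ) * (ν (closedBall p ε)).toReal ^ k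
            * (1 - (ν (closedBall p ε)).toReal) ^ (m - k) * f k := by
  haveI : SecondCountableTopology M := UniformSpace.secondCountable_of_separable M
  intro m
  induction m with
  | zero =>
    intro f
    have h0 : ∀ y : Fin 0 → M, cntN ε p y = 0 := by intro y; simp [cntN]
    simp only [h0]
    rw [integral_const]
    simp
  | succ m ih =>
    intro f
    set b := (ν (closedBall p ε)).toReal with hbdef
    set e := MeasurableEquiv.piFinSuccAbove (fun _ : Fin (m+1) => M) 0 with he
    have hmp := (measurePreserving_piFinSuccAbove (fun _ : Fin (m+1) => ν) 0).symm e
    have h0 : ∫ y : Fin (m+1) → M, f (cntN ε p y) ∂(Measure.pi fun _ => ν)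
        = ∫ z : M × (Fin m → M), f (cntN ε p (e.symm z))
            ∂(ν.prod (Measure.pi fun _ => ν)) :=
      (hmp.integral_comp' (fun y => f (cntN ε p y))).symm
    have hcons : ∀ z : M × (Fin m → M),
        cntN ε p (e.symm z) = (if dist z.1 p ≤ ε then 1 else 0) + cntN ε p z.2 := by
      rintro ⟨a, y⟩
      have h : e.symm (a, y) = Fin.insertNth 0 a y := rfl
      rw [h]
      unfold cntN
      rw [Fin.sum_univ_succAbove _ 0]
      simp
    set C : ℝ := ∑ j ∈ Finset.range (m+2), |f j| with hC
    have hmeasN : Measurable (fun z : M × (Fin m → M) =>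
        (if dist z.1 p ≤ ε then 1 else 0) + cntN ε p z.2) := by
      apply Measurable.add
      · have hs : MeasurableSet {z : M × (Fin m → M) | dist z.1 p ≤ ε} :=
          measurableSet_le (Continuous.dist continuous_fst continuous_const).measurable
            measurable_const
        exact Measurable.ite hs measurable_const measurable_const
      · exact (measurable_cntN ε).comp (measurable_const.prodMk measurable_snd)
    have hmeasF : Measurable (fun z : M × (Fin m → M) =>
        f ((if dist z.1 p ≤ ε then 1 else 0) + cntN ε p z.2)) :=
      measurable_from_top.comp hmeasN
    have hboundF : ∀ z : M × (Fin m → M),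
        ‖f ((if dist z.1 p ≤ ε then 1 else 0) + cntN ε p z.2)‖ ≤ C := by
      intro z
      have h1 : (if dist z.1 p ≤ ε then 1 else 0) + cntN ε p z.2 < m + 2 := by
        have := cntN_le ε p z.2
        split <;> omega
      rw [Real.norm_eq_abs]
      exact Finset.single_le_sum (f := fun j => |f j|) (fun i _ => abs_nonneg _)
        (Finset.mem_range.2 h1)
    have hint : Integrable (fun z : M × (Fin m → M) =>
        f ((if dist z.1 p ≤ ε then 1 else 0) + cntN ε p z.2))
        (ν.prod (Measure.pi fun _ => ν)) :=
      (integrable_const C).mono' hmeasF.aestronglyMeasurable (ae_of_all _ hboundF)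
    set A : ℝ := ∑ k ∈ Finset.range (m+1), (m.choose k : ℝ) * b^k * (1-b)^(m-k) * f (k+1)
      with hA
    set B : ℝ := ∑ k ∈ Finset.range (m+1), (m.choose k : ℝ) * b^k * (1-b)^(m-k) * f k with hB
    have hinner : ∀ a : M,
        (∫ y : Fin m → M, f ((if dist a p ≤ ε then 1 else 0) + cntN ε p y)
            ∂(Measure.pi fun _ => ν))
          = if dist a p ≤ ε then A else B := by
      intro a
      by_cases ha : dist a p ≤ ε
      · simp only [ha, if_true]
        have h6 : ∀ y : Fin m → M, f (1 + cntN ε p y) = (fun k => f (k+1)) (cntN ε p y) := by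
          intro y; simp [Nat.add_comm]
        simp only [h6]
        exact ih (fun k => f (k+1))
      · simp only [ha, if_false]
        have h6 : ∀ y : Fin m → M, f (0 + cntN ε p y) = f (cntN ε p y) := by
          intro y; simp
        simp only [h6]
        exact ih f
    calc ∫ y : Fin (m+1) → M, f (cntN ε p y) ∂(Measure.pi fun _ => ν)
        = ∫ z : M × (Fin m → M), f ((if dist z.1 p ≤ ε then 1 else 0) + cntN ε p z.2)
            ∂(ν.prod (Measure.pi fun _ => ν)) := by
          rw [h0]; congr 1; funext z; rw [hcons z]
      _ = ∫ a, ∫ y : Fin m → M, f ((if dist a p ≤ ε then 1 else 0) + cntN ε p y)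
            ∂(Measure.pi fun _ => ν) ∂ν := integral_prod _ hint
      _ = ∫ a, (if dist a p ≤ ε then A else B) ∂ν := by
          congr 1; funext a; exact hinner a
      _ = b * A + (1-b) * B := by
          have hrw : (fun a : M => if dist a p ≤ ε then A else B)
              = fun a => (closedBall p ε).indicator (fun _ => A - B) a + B := by
            funext a
            by_cases ha : dist a p ≤ ε <;>
              simp [Set.indicator_apply, mem_closedBall, ha]
          rw [hrw, integral_add ((integrable_const (A-B)).indicator measurableSet_closedBall)
            (integrable_const B), integral_indicator_const _ measurableSet_closedBall,
            integral_const]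
          simp only [probReal_univ, ENNReal.toReal_one, one_smul, smul_eq_mul]
          rw [measureReal_def, ← hbdef]
          ring
      _ = ∑ k ∈ Finset.range (m+2), ((m+1).choose k : ℝ) * b^k * (1-b)^(m+1-k) * f k :=
          pascal_step m b f

theorem stmt10 {M : Type*} [MetricSpace M] [MeasurableSpace M] [BorelSpace M]
    [TopologicalSpace.SeparableSpace M]
    (ν : Measure M) [IsProbabilityMeasure ν] (n : ℕ) (hn : 1 ≤ n) (ε : ℝ) (hε : 0 ≤ ε)
    (hAC : ∀ᵐ p ∂ν, ∀ c d : ℝ, 0 ≤ c →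
      AbsolutelyContinuousOnIcc (fun r => (ν (closedBall p r)).toReal) c d) :
    ∫ x, idSuccN ε x ∂(Measure.pi fun _ : Fin n => ν)
      = ∫ p, (if (ν (closedBall p ε)).toReal = 0 then 1
          else (1 - (1 - (ν (closedBall p ε)).toReal) ^ n)
            / ((n : ℝ) * (ν (closedBall p ε)).toReal)) ∂ν := by
  classical
  haveI : SecondCountableTopology M := UniformSpace.secondCountable_of_separable M
  obtain ⟨m, rfl⟩ : ∃ m, n = m + 1 := ⟨n - 1, by omega⟩
  have hsim_ge : ∀ (x : Fin (m+1) → M) (j : Fin (m+1)), 1 ≤ simCount ε x j := by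
    intro x j
    unfold simCount
    have h1 : (if dist (x j) (x j) ≤ ε then (1:ℝ) else 0) = 1 := by simp [hε]
    calc (1:ℝ) = if dist (x j) (x j) ≤ ε then (1:ℝ) else 0 := h1.symm
      _ ≤ ∑ i, if dist (x i) (x j) ≤ ε then (1:ℝ) else 0 :=
          Finset.single_le_sum (f := fun i => if dist (x i) (x j) ≤ ε then (1:ℝ) else 0)
            (fun i _ => by by_cases hd : dist (x i) (x j) ≤ ε <;> simp [hd])
            (Finset.mem_univ j)
  have hFmeas : ∀ j, Measurable (fun x : Fin (m+1) → M => 1 / simCount ε x j) := by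
    intro j
    apply Measurable.div measurable_const
    unfold simCount
    apply Finset.measurable_sum
    intro i _
    have hc : Continuous (fun x : Fin (m+1) → M => dist (x i) (x j)) :=
      Continuous.dist (continuous_apply i) (continuous_apply j)
    exact Measurable.ite (measurableSet_le hc.measurable measurable_const)
      measurable_const measurable_const
  have hFint : ∀ j, Integrable (fun x => 1 / simCount ε x j)
      (Measure.pi fun _ : Fin (m+1) => ν) := by
    intro j
    refine (integrable_const (1:ℝ)).mono' (hFmeas j).aestronglyMeasurable (ae_of_all _ ?_)
    intro x
    have h1 := hsim_ge x j
    rw [Real.norm_eq_abs, abs_of_nonneg (by positivity)]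
    rw [div_le_one (by linarith)]
    linarith
  have hstep : ∀ j : Fin (m+1),
      ∫ x, 1 / simCount ε x j ∂(Measure.pi fun _ : Fin (m+1) => ν)
        = ∫ p, (if (ν (closedBall p ε)).toReal = 0 then 1
            else (1 - (1 - (ν (closedBall p ε)).toReal) ^ (m+1))
              / (((m+1 : ℕ) : ℝ) * (ν (closedBall p ε)).toReal)) ∂ν := by
    intro j
    set e := MeasurableEquiv.piFinSuccAbove (fun _ : Fin (m+1) => M) j with he
    have hmp := (measurePreserving_piFinSuccAbove (fun _ : Fin (m+1) => ν) j).symm e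
    rw [← hmp.integral_comp' (fun x => 1 / simCount ε x j)]
    have hsim : ∀ z : M × (Fin m → M),
        1 / simCount ε (e.symm z) j = 1 / (1 + (cntN ε z.1 z.2 : ℝ)) := by
      rintro ⟨p, y⟩
      have h : e.symm (p, y) = Fin.insertNth j p y := rfl
      rw [h]
      unfold simCount cntN
      rw [Fin.insertNth_apply_same]
      conv_lhs => rw [Fin.sum_univ_succAbove _ j]
      simp only [Fin.insertNth_apply_same, Fin.insertNth_apply_succAbove, dist_self,
        if_pos hε]
      push_cast [apply_ite (fun x : ℕ => (x : ℝ))]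
      ring_nf
    simp only [hsim]
    have hG : Measurable (fun z : M × (Fin m → M) => 1 / (1 + (cntN ε z.1 z.2 : ℝ))) :=
      (measurable_from_top (f := fun k : ℕ => 1 / (1 + (k:ℝ)))).comp (measurable_cntN ε)
    have hGint : Integrable (fun z : M × (Fin m → M) => 1 / (1 + (cntN ε z.1 z.2 : ℝ)))
        (ν.prod (Measure.pi fun _ => ν)) := by
      refine (integrable_const (1:ℝ)).mono' hG.aestronglyMeasurable (ae_of_all _ ?_)
      intro z
      have h1 : (0:ℝ) ≤ (cntN ε z.1 z.2 : ℝ) := Nat.cast_nonneg _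
      rw [Real.norm_eq_abs, abs_of_nonneg (by positivity), div_le_one (by linarith)]
      linarith
    rw [integral_prod _ hGint]
    refine integral_congr_ae (Filter.Eventually.of_forall fun p => ?_)
    dsimp only
    have hkey := key_binom ν ε p m (fun k => 1 / (1 + (k:ℝ)))
    rw [hkey, binom_sum_inv m ((ν (closedBall p ε)).toReal)]
    push_cast
    ring_nf
  have hL : ∫ x, idSuccN ε x ∂(Measure.pi fun _ : Fin (m+1) => ν)
      = (1 / ((m+1 : ℕ) : ℝ)) * ∑ j : Fin (m+1),
          ∫ x, 1 / simCount ε x j ∂(Measure.pi fun _ : Fin (m+1) => ν) := by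
    simp only [idSuccN]
    rw [MeasureTheory.integral_const_mul]
    rw [integral_finset_sum _ (fun j _ => hFint j)]
  rw [hL, Finset.sum_congr rfl (fun j _ => hstep j), Finset.sum_const, Finset.card_univ,
    Fintype.card_fin, nsmul_eq_mul]
  have hne : ((m+1 : ℕ) : ℝ) ≠ 0 := by positivity
  field_simp
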